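/- Let A, B : Fin n → ℝ be vectors with nonnegative entries and let h be a random function from Fin n to Fin w such that for every pair i ≠ i', the probability that h(i) = h(i') is at most 1/w. Then the expected excess of the count-min row estimate over the true inner product satisfies E[ E_h − ⟨A,B⟩ ] = E[ Σ_{i ≠ i'} A_i·B_{i'}·1[h(i)=h(i')] ] ≤ (1/w) · ‖A‖₁·‖B‖₁. -/
import Mathlib


/-!
Setting: `A B : Fin n → ℝ` are vectors with nonnegative entries.  A random hash function
`h : Fin n → Fin w` is modeled by a probability mass function `p` on the finite set of all
functions `Fin n → Fin w` (`p ≥ 0`, `Σ_h p h = 1`) such that for every pair `i ≠ i'` the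
collision probability `Pr[h i = h i']` is at most `1/w`.  The count-min row estimate is
`E_h = Σ_{b ∈ Fin w} (Σ_{i : h i = b} A_i)·(Σ_{i : h i = b} B_i)`, and expectations are
`E[X] = Σ_h p h · X h`.
-/

open Finset

/-- The count-min row estimate of `⟨A,B⟩` determined by a hash function `h`. -/
def rowEstimate {n w : ℕ} (A B : Fin n → ℝ) (h : Fin n → Fin w) : ℝ :=
  ∑ b : Fin w,
    (∑ i ∈ Finset.univ.filter (fun i => h i = b), A i) *
    (∑ i ∈ Finset.univ.filter (fun i => h i = b), B i)

/-- The expected excess of the count-min row estimate over the true inner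
product satisfies
`E[E_h − ⟨A,B⟩] = E[Σ_{i ≠ i'} A_i B_{i'} 1[h i = h i']] ≤ (1/w)·‖A‖₁·‖B‖₁`. -/
theorem countMin_expected_excess {n w : ℕ} (hw : 0 < w)
    (A B : Fin n → ℝ) (hA : ∀ i, 0 ≤ A i) (hB : ∀ i, 0 ≤ B i)
    (p : (Fin n → Fin w) → ℝ)
    (hp0 : ∀ h, 0 ≤ p h) (hp1 : ∑ h : Fin n → Fin w, p h = 1)
    (hcol : ∀ i i' : Fin n, i ≠ i' →
      ∑ h ∈ Finset.univ.filter (fun h : Fin n → Fin w => h i = h i'), p h ≤ 1 / (w : ℝ)) :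
    (∑ h : Fin n → Fin w, p h * (rowEstimate A B h - ∑ i : Fin n, A i * B i)
        = ∑ h : Fin n → Fin w, p h *
            (∑ i : Fin n, ∑ i' ∈ Finset.univ.erase i,
              A i * B i' * (if h i = h i' then (1 : ℝ) else 0)))
    ∧ (∑ h : Fin n → Fin w, p h *
          (∑ i : Fin n, ∑ i' ∈ Finset.univ.erase i,
            A i * B i' * (if h i = h i' then (1 : ℝ) else 0))
        ≤ (1 / (w : ℝ)) * ((∑ i : Fin n, A i) * (∑ i : Fin n, B i))) := by

  have key2 : ∀ h : Fin n → Fin w,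
      rowEstimate A B h - ∑ i : Fin n, A i * B i
        = ∑ i : Fin n, ∑ i' ∈ Finset.univ.erase i,
            A i * B i' * (if h i = h i' then (1 : ℝ) else 0) := by
    intro h
    have key : rowEstimate A B h
        = ∑ i : Fin n, ∑ i' : Fin n, A i * B i' * (if h i = h i' then (1:ℝ) else 0) := by
      unfold rowEstimate
      simp only [Finset.sum_filter, Finset.sum_mul_sum]
      rw [Finset.sum_comm]
      refine Finset.sum_congr rfl fun i _ => ?_
      rw [Finset.sum_comm]
      refine Finset.sum_congr rfl fun i' _ => ?_
      simp only [ite_mul, mul_ite, zero_mul, mul_zero]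
      rw [Finset.sum_ite_eq Finset.univ (h i')]
      by_cases hc : h i = h i' <;> simp [hc, eq_comm]
    rw [key, ← Finset.sum_sub_distrib]
    refine Finset.sum_congr rfl fun i _ => ?_
    rw [← Finset.add_sum_erase Finset.univ _ (Finset.mem_univ i)]
    simp
  constructor
  · exact Finset.sum_congr rfl fun h _ => by rw [key2 h]
  · have swap : (∑ h : Fin n → Fin w, p h *
          (∑ i : Fin n, ∑ i' ∈ Finset.univ.erase i,
            A i * B i' * (if h i = h i' then (1 : ℝ) else 0)))
        = ∑ i : Fin n, ∑ i' ∈ Finset.univ.erase i, A i * B i' *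
            (∑ h ∈ Finset.univ.filter (fun h : Fin n → Fin w => h i = h i'), p h) := by
      simp only [Finset.mul_sum, Finset.sum_filter]
      rw [Finset.sum_comm]
      refine Finset.sum_congr rfl fun i _ => ?_
      rw [Finset.sum_comm]
      refine Finset.sum_congr rfl fun i' _ => ?_
      refine Finset.sum_congr rfl fun h _ => ?_
      by_cases hc : h i = h i' <;> simp [hc] <;> ring
    rw [swap]
    have step1 : (∑ i : Fin n, ∑ i' ∈ Finset.univ.erase i, A i * B i' *
            (∑ h ∈ Finset.univ.filter (fun h : Fin n → Fin w => h i = h i'), p h))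
        ≤ ∑ i : Fin n, ∑ i' ∈ Finset.univ.erase i, A i * B i' * (1 / (w:ℝ)) := by
      refine Finset.sum_le_sum fun i _ => Finset.sum_le_sum fun i' hi' => ?_
      exact mul_le_mul_of_nonneg_left
        (hcol i i' (Ne.symm (Finset.mem_erase.mp hi').1))
        (mul_nonneg (hA i) (hB i'))
    refine step1.trans ?_
    have step2 : (∑ i : Fin n, ∑ i' ∈ Finset.univ.erase i, A i * B i' * (1 / (w:ℝ)))
        ≤ ∑ i : Fin n, ∑ i' : Fin n, A i * B i' * (1 / (w:ℝ)) := by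
      refine Finset.sum_le_sum fun i _ => ?_
      refine Finset.sum_le_sum_of_subset_of_nonneg (Finset.subset_univ _) fun i' _ _ =>
        mul_nonneg (mul_nonneg (hA i) (hB i')) (by positivity)
    refine step2.trans_eq ?_
    rw [Finset.sum_mul_sum, Finset.mul_sum]
    refine Finset.sum_congr rfl fun i _ => ?_
    rw [Finset.mul_sum]
    exact Finset.sum_congr rfl fun i' _ => by ring
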